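/- Let p be an odd prime, let a ∈ ℂ_p and R > 0, and let f be holomorphic on the closed disc D⁺(a,R). Let b ∈ ℂ_p with |b − a|_p = R, let z ∈ D⁺(a,R) with z ∉ 𝒜(a,b), and let α ∈ ℤ with α ≥ 0. If |a − z|_p < R, then f(z) = ∫_{𝒜(a,b),Φ_α} f(x)/(x − z) dx. If |a − z|_p = R, let ζ be a root of unity in ℂ_p of order coprime to p with |(a − z)/(a − b) − ζ|_p < 1; then f(z) = (1 − ζ^{p^α}) · ∫_{𝒜(a,b),Φ_α} f(x)/(x − z) dx. -/

import Mathlib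

/-!
Throughout, `K` plays the role of `ℂ_p`, the completion of an algebraic closure of `ℚ_p`:
it is a complete, algebraically closed, nonarchimedean (ultrametric) normed field equipped
with an isometric `ℚ_[p]`-algebra structure (hypothesis `hKext`).
-/

open scoped BigOperators

/-- A *path sequence*: a function defined (positive-valued and strictly increasing)
for `k ≥ k₀`, for some positive integer `k₀`. -/
structure PathSeq where
  toFun : ℕ → ℕ
  k₀ : ℕ
  k₀_pos : 0 < k₀
  pos : ∀ k, k₀ ≤ k → 0 < toFun k
  mono : ∀ k l, k₀ ≤ k → k < l → toFun k < toFun l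

/-- The Riemann-type sum `A_{f,φ}(k)` (with `N = φ(k)`):
`p^{-N} ∑_ζ (b - a) ζ · f (a + (b - a) ζ)`, `ζ` ranging over the `p^N`-th roots of unity. -/
noncomputable def Asum (p : ℕ) (K : Type*) [NormedField K] (a b : K) (f : K → K) (N : ℕ) : K :=
  ((p : K) ^ N)⁻¹ *
    ∑ ζ ∈ Polynomial.nthRootsFinset (p ^ N) (1 : K), (b - a) * ζ * f (a + (b - a) * ζ)

/-- `ψ` is, for `k ≥ k₀`, a subsequence of the path sequence `φ`. -/
def SubseqFrom (ψ φ : PathSeq) (k₀ : ℕ) : Prop :=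
  ∃ σ : ℕ → ℕ, (∀ k l, k₀ ≤ k → k < l → σ k < σ l) ∧
    ∀ k, k₀ ≤ k → φ.k₀ ≤ σ k ∧ ψ.toFun k = φ.toFun (σ k)

/-- An *interlocked* family of path sequences: nonempty, and any two members have a common
member-subsequence. -/
def Interlocked (Φ : Set PathSeq) : Prop :=
  Φ.Nonempty ∧ ∀ φ₁ ∈ Φ, ∀ φ₂ ∈ Φ, ∃ φ₃ ∈ Φ, ∃ k₀ : ℕ, 0 < k₀ ∧
    SubseqFrom φ₃ φ₁ k₀ ∧ SubseqFrom φ₃ φ₂ k₀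

/-- `∫_{𝒜(a,b),Φ} f(x) dx = L`: for every `ε > 0` there are `φ ∈ Φ` and `M` such that
`|A_{f,φ}(k) - L| < ε` for all `k > M` (in the domain of `φ`). -/
def HasIntegral (p : ℕ) (K : Type*) [NormedField K] (a b : K) (f : K → K)
    (Φ : Set PathSeq) (L : K) : Prop :=
  ∀ ε : ℝ, 0 < ε → ∃ φ ∈ Φ, ∃ M : ℕ, φ.k₀ ≤ M ∧
    ∀ k, M < k → ‖Asum p K a b f (φ.toFun k) - L‖ < ε

/-- `f` is holomorphic on `S`: its values on `S` are given by the single power series with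
coefficients `c`, centered at `b`, convergent on `S`. -/
def HolomorphicOn' (K : Type*) [NormedField K] (c : ℕ → K) (b : K) (f : K → K)
    (S : Set K) : Prop :=
  ∀ x ∈ S, Summable (fun n : ℕ => c n * (x - b) ^ n) ∧ f x = ∑' n : ℕ, c n * (x - b) ^ n

/-- The arc `𝒜(a,b)`: the open disc of radius `R = |a - b|` around `b`. -/
def arc (K : Type*) [NormedField K] (a b : K) : Set K := {x : K | ‖x - b‖ < ‖a - b‖}

/-- `c` are controlled coefficients of order `β` (for the radius `R`). -/
def Controlled (K : Type*) [NormedField K] (c : ℕ → K) (R β : ℝ) : Prop :=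
  ∃ M n₀ : ℝ, 0 < n₀ ∧ ∀ n : ℕ, n₀ < (n : ℝ) → ‖c n‖ * R ^ n < M * (n : ℝ) ^ β

/-- The interlocked family `Φ_α = {k ↦ α + λ k : λ ∈ ℤ⁺}`. -/
def PhiAlpha (α : ℕ) : Set PathSeq :=
  {φ : PathSeq | ∃ lam : ℕ, 0 < lam ∧ ∀ k : ℕ, φ.toFun k = α + lam * k}

/-! ### Auxiliary lemmas -/

open Finset

section RootSums

lemma sum_nthRoots_pow {K : Type*} [Field K] [IsAlgClosed K] [CharZero K] {M : ℕ} (hM : 0 < M)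
    (j : ℕ) :
    ∑ ζ ∈ Polynomial.nthRootsFinset M (1 : K), ζ ^ j = if M ∣ j then (M : K) else 0 := by
  classical
  have hMK : NeZero ((M : K)) := ⟨Nat.cast_ne_zero.mpr hM.ne'⟩
  obtain ⟨η, hη⟩ := HasEnoughRootsOfUnity.exists_primitiveRoot K M
  have hinj : Set.InjOn (η ^ ·) (range M) := fun i hi j hj h =>
    hη.pow_inj (mem_range.1 hi) (mem_range.1 hj) h
  have himg : Polynomial.nthRootsFinset M (1 : K) = (range M).image (η ^ ·) := by
    refine (Finset.eq_of_subset_of_card_le (fun x hx => ?_) ?_).symm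
    · obtain ⟨i, _, rfl⟩ := Finset.mem_image.1 hx
      rw [Polynomial.mem_nthRootsFinset hM (1 : K), ← pow_mul, mul_comm, pow_mul, hη.pow_eq_one, one_pow]
    · rw [Finset.card_image_of_injOn hinj, Finset.card_range, hη.card_nthRootsFinset]
  rw [himg, Finset.sum_image hinj]
  have hc : ∀ i, (η ^ i) ^ j = (η ^ j) ^ i := fun i => by
    rw [← pow_mul, mul_comm, pow_mul]
  simp_rw [hc]
  by_cases hdvd : M ∣ j
  · have h1 : η ^ j = 1 := (hη.pow_eq_one_iff_dvd j).2 hdvd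
    simp [h1, hdvd]
  · have hne : η ^ j ≠ 1 := fun h => hdvd ((hη.pow_eq_one_iff_dvd j).1 h)
    rw [geom_sum_eq hne, if_neg hdvd]
    have h2 : (η ^ j) ^ M = 1 := by
      rw [← pow_mul, mul_comm, pow_mul, hη.pow_eq_one, one_pow]
    rw [h2, sub_self, zero_div]

lemma keySum {K : Type*} [Field K] [IsAlgClosed K] [CharZero K] {M : ℕ} (hM : 0 < M)
    {t : K} (ht : t ^ M ≠ 1) (n : ℕ) :
    ∑ ζ ∈ Polynomial.nthRootsFinset M (1 : K), ζ ^ (n + 1) / (ζ - t)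
      = (M : K) * t ^ (n % M) / (1 - t ^ M) := by
  have h1t : (1 : K) - t ^ M ≠ 0 := sub_ne_zero.mpr (Ne.symm ht)
  have hstep : ∀ ζ ∈ Polynomial.nthRootsFinset M (1 : K),
      ζ ^ (n + 1) / (ζ - t) = (∑ i ∈ range M, ζ ^ (n + 1 + i) * t ^ (M - 1 - i)) / (1 - t ^ M) := by
    intro ζ hζ
    have hζM : ζ ^ M = 1 := (Polynomial.mem_nthRootsFinset hM _).1 hζ
    have hζt : ζ - t ≠ 0 := by
      intro h
      rw [sub_eq_zero] at h
      exact ht (h ▸ hζM)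
    have hgeom : (∑ i ∈ range M, ζ ^ i * t ^ (M - 1 - i)) * (ζ - t) = 1 - t ^ M := by
      rw [geom_sum₂_mul, hζM]
    rw [div_eq_div_iff hζt h1t, ← hgeom]
    rw [← mul_assoc]
    congr 1
    rw [Finset.mul_sum]
    refine Finset.sum_congr rfl fun i _ => ?_
    rw [pow_add]
    ring
  rw [Finset.sum_congr rfl hstep, ← Finset.sum_div]
  congr 1
  rw [Finset.sum_comm]
  have hin : ∀ i ∈ range M, (∑ ζ ∈ Polynomial.nthRootsFinset M (1 : K), ζ ^ (n + 1 + i) * t ^ (M - 1 - i))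
      = (if M ∣ (n + 1 + i) then (M : K) else 0) * t ^ (M - 1 - i) := by
    intro i _
    rw [← Finset.sum_mul, sum_nthRoots_pow hM]
  rw [Finset.sum_congr rfl hin]
  have hmod := Nat.div_add_mod n M
  have hlt : n % M < M := Nat.mod_lt _ hM
  set i₀ := M - 1 - n % M with hi₀
  have hi₀mem : i₀ ∈ range M := mem_range.2 (by omega)
  have hdvd₀ : M ∣ (n + 1 + i₀) := by
    have he : n + 1 + i₀ = M * (n / M) + M := by omega
    rw [he]
    exact dvd_add (dvd_mul_right _ _) dvd_rfl
  rw [Finset.sum_eq_single_of_mem i₀ hi₀mem ?uniq]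
  · rw [if_pos hdvd₀]
    congr 2
    omega
  case uniq =>
    intro i hi hne
    rw [if_neg, zero_mul]
    intro hdvd
    apply hne
    have h1 := Nat.dvd_sub hdvd hdvd₀
    have h2 := Nat.dvd_sub hdvd₀ hdvd
    have h3 : n + 1 + i - (n + 1 + i₀) = i - i₀ := by omega
    have h4 : n + 1 + i₀ - (n + 1 + i) = i₀ - i := by omega
    rw [h3] at h1; rw [h4] at h2
    have hiM := mem_range.1 hi
    have h5 := Nat.eq_zero_of_dvd_of_lt h1
    have h6 := Nat.eq_zero_of_dvd_of_lt h2
    by_cases hii : i - i₀ = 0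
    · by_cases hjj : i₀ - i = 0
      · omega
      · have := h6 (by omega)
        omega
    · have := h5 (by omega)
      omega

end RootSums

section NormFacts

lemma norm_eq_one_of_pow_eq_one {K : Type*} [NormedField K] {x : K} {m : ℕ} (hm : 0 < m)
    (hx : x ^ m = 1) : ‖x‖ = 1 := by
  have h : ‖x‖ ^ m = 1 := by rw [← norm_pow, hx, norm_one]
  rcases lt_trichotomy ‖x‖ 1 with h1 | h1 | h1
  · have := pow_lt_one₀ (norm_nonneg x) h1 hm.ne'
    simp [h] at this
  · exact h1
  · have := one_lt_pow₀ h1 hm.ne'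
    simp [h] at this

variable {K : Type*} [NormedField K] [IsUltrametricDist K]

lemma my_norm_add_eq_left {x y : K} (h : ‖y‖ < ‖x‖) : ‖x + y‖ = ‖x‖ := by
  rw [IsUltrametricDist.norm_add_eq_max_of_norm_ne_norm h.ne', max_eq_left h.le]

lemma norm_sub_le_one {x y : K} (hx : ‖x‖ ≤ 1) (hy : ‖y‖ ≤ 1) : ‖x - y‖ ≤ 1 := by
  have h := IsUltrametricDist.norm_add_le_max x (-y)
  rw [norm_neg] at h
  calc ‖x - y‖ = ‖x + -y‖ := by ring_nf
  _ ≤ max ‖x‖ ‖y‖ := h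
  _ ≤ 1 := max_le hx hy

end NormFacts

section Pad

variable {p : ℕ} [Fact (Nat.Prime p)] {K : Type*} [NormedField K] [Algebra ℚ_[p] K]
  (hKext : ∀ q : ℚ_[p], ‖algebraMap ℚ_[p] K q‖ = ‖q‖)

include hKext

lemma charZero_of_ext : CharZero K := by
  refine ⟨fun a b h => ?_⟩
  have h2 : algebraMap ℚ_[p] K ((a : ℚ_[p]) - (b : ℚ_[p])) = 0 := by
    rw [map_sub, map_natCast, map_natCast, h, sub_self]
  have h3 := hKext ((a : ℚ_[p]) - (b : ℚ_[p]))
  rw [h2, norm_zero] at h3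
  have h4 : (a : ℚ_[p]) = (b : ℚ_[p]) := by
    rw [← sub_eq_zero]
    exact norm_eq_zero.mp h3.symm
  exact_mod_cast h4

lemma norm_natCast_le_one' (m : ℕ) : ‖(m : K)‖ ≤ 1 := by
  rw [← map_natCast (algebraMap ℚ_[p] K), hKext]
  have := Padic.norm_int_le_one (p := p) (m : ℤ)
  simpa using this

lemma norm_natCast_eq_one' {m : ℕ} (hm : ¬ p ∣ m) : ‖(m : K)‖ = 1 := by
  rw [← map_natCast (algebraMap ℚ_[p] K), hKext]
  have h1 := Padic.norm_int_le_one (p := p) (m : ℤ)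
  have h2 : ¬ ‖((m : ℤ) : ℚ_[p])‖ < 1 := by
    rw [Padic.norm_intCast_lt_one_iff]
    exact_mod_cast hm
  push_cast at h1 h2 ⊢
  linarith [lt_or_eq_of_le h1]

lemma norm_natCast_le_inv' {m : ℕ} (hm : p ∣ m) : ‖(m : K)‖ ≤ (p : ℝ)⁻¹ := by
  obtain ⟨s, rfl⟩ := hm
  rw [← map_natCast (algebraMap ℚ_[p] K), hKext]
  push_cast
  rw [norm_mul, Padic.norm_p]
  have h1 : ‖((s : ℤ) : ℚ_[p])‖ ≤ 1 := Padic.norm_int_le_one _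
  push_cast at h1
  have hp0 : (0:ℝ) < (p : ℝ)⁻¹ := by
    have := (Fact.out : p.Prime).pos
    positivity
  nlinarith [norm_nonneg ((s : ℚ_[p]))]

end Pad

section Pad2

variable {p : ℕ} [Fact (Nat.Prime p)] {K : Type*} [NormedField K] [IsUltrametricDist K]
  [Algebra ℚ_[p] K] (hKext : ∀ q : ℚ_[p], ‖algebraMap ℚ_[p] K q‖ = ‖q‖)

include hKext

lemma norm_one_sub_root_eq_one {x : K} {m : ℕ} (hm : 0 < m) (hdvd : ¬ p ∣ m)
    (hx : x ^ m = 1) (hx1 : x ≠ 1) : ‖1 - x‖ = 1 := by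
  have hx_norm : ‖x‖ = 1 := norm_eq_one_of_pow_eq_one hm hx
  have hle : ‖1 - x‖ ≤ 1 := norm_sub_le_one (by simp) hx_norm.le
  rcases eq_or_lt_of_le hle with heq | hlt
  · exact heq
  exfalso
  set δ := x - 1 with hδdef
  have hδ0 : δ ≠ 0 := sub_ne_zero.mpr hx1
  have hδ : ‖δ‖ < 1 := by rwa [← norm_sub_rev]
  have hδ1 : ‖δ‖ ≤ 1 := hδ.le
  have hkey : ∑ k ∈ range (m + 1), δ ^ k * (m.choose k : K) = 1 := by
    have h := add_pow δ 1 m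
    simp only [one_pow, mul_one] at h
    rw [← h]
    have : δ + 1 = x := by rw [hδdef]; ring
    rw [this, hx]
  rw [Finset.range_eq_Ico, Finset.sum_eq_sum_Ico_succ_bot (by omega),
    Finset.sum_eq_sum_Ico_succ_bot (by omega : 1 < m + 1)] at hkey
  simp only [pow_zero, one_mul, Nat.choose_zero_right, Nat.cast_one, pow_one,
    Nat.choose_one_right] at hkey
  have hrel : δ * (m : K) = -∑ k ∈ Ico 2 (m + 1), δ ^ k * (m.choose k : K) := by
    linear_combination hkey
  have hLHS : ‖δ * (m : K)‖ = ‖δ‖ := by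
    rw [norm_mul, norm_natCast_eq_one' hKext hdvd, mul_one]
  have hRHS : ‖∑ k ∈ Ico 2 (m + 1), δ ^ k * (m.choose k : K)‖ ≤ ‖δ‖ ^ 2 := by
    refine IsUltrametricDist.norm_sum_le_of_forall_le_of_nonneg (by positivity) fun k hk => ?_
    have hk2 : 2 ≤ k := (Finset.mem_Ico.1 hk).1
    rw [norm_mul, norm_pow]
    calc ‖δ‖ ^ k * ‖(m.choose k : K)‖ ≤ ‖δ‖ ^ k * 1 :=
          mul_le_mul_of_nonneg_left (norm_natCast_le_one' hKext _) (by positivity)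
    _ = ‖δ‖ ^ k := mul_one _
    _ ≤ ‖δ‖ ^ 2 := pow_le_pow_of_le_one (norm_nonneg _) hδ1 hk2
  rw [hrel, norm_neg] at hLHS
  have hsq : ‖δ‖ ^ 2 < ‖δ‖ := by
    have h0 : 0 < ‖δ‖ := norm_pos_iff.mpr hδ0
    calc ‖δ‖ ^ 2 = ‖δ‖ * ‖δ‖ := sq ‖δ‖
    _ < 1 * ‖δ‖ := mul_lt_mul_of_pos_right hδ h0
    _ = ‖δ‖ := one_mul _
  linarith [hLHS ▸ hRHS]

lemma pow_p_contract {x y : K} (hx : ‖x‖ ≤ 1) (hy : ‖y‖ ≤ 1) :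
    ‖x ^ p - y ^ p‖ ≤ ‖x - y‖ * max (‖x - y‖ ^ (p - 1)) (p : ℝ)⁻¹ := by
  have hp := (Fact.out : p.Prime)
  set δ := x - y with hδdef
  have hδ1 : ‖δ‖ ≤ 1 := norm_sub_le_one hx hy
  have hkey : x ^ p - y ^ p = ∑ k ∈ Ico 1 (p + 1), δ ^ k * y ^ (p - k) * (p.choose k : K) := by
    have h := add_pow δ y p
    have hxd : δ + y = x := by rw [hδdef]; ring
    rw [hxd] at h
    rw [Finset.range_eq_Ico, Finset.sum_eq_sum_Ico_succ_bot (by omega)] at h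
    simp only [pow_zero, one_mul, Nat.choose_zero_right, Nat.cast_one, mul_one, Nat.sub_zero] at h
    linear_combination h
  rw [hkey]
  refine IsUltrametricDist.norm_sum_le_of_forall_le_of_nonneg (by positivity) fun k hk => ?_
  obtain ⟨hk1, hk2⟩ := Finset.mem_Ico.1 hk
  rw [norm_mul, norm_mul, norm_pow, norm_pow]
  have hyk : ‖y‖ ^ (p - k) ≤ 1 := pow_le_one₀ (norm_nonneg _) hy
  rcases eq_or_lt_of_le (Nat.lt_succ_iff.mp hk2) with hkp | hkp
  · subst hkp
    simp only [Nat.choose_self, Nat.cast_one, norm_one, mul_one]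
    calc ‖δ‖ ^ k * ‖y‖ ^ (k - k) ≤ ‖δ‖ ^ k * 1 :=
          mul_le_mul_of_nonneg_left hyk (by positivity)
    _ = ‖δ‖ * ‖δ‖ ^ (k - 1) := by
          rw [mul_one, ← pow_succ']
          congr 1
          omega
    _ ≤ ‖δ‖ * max (‖δ‖ ^ (k - 1)) (k : ℝ)⁻¹ :=
          mul_le_mul_of_nonneg_left (le_max_left _ _) (norm_nonneg _)
  · have hdvd : p ∣ p.choose k := hp.dvd_choose_self (by omega) hkp
    have hC : ‖(p.choose k : K)‖ ≤ (p : ℝ)⁻¹ := norm_natCast_le_inv' hKext hdvd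
    have hδk : ‖δ‖ ^ k ≤ ‖δ‖ := by
      calc ‖δ‖ ^ k ≤ ‖δ‖ ^ 1 := pow_le_pow_of_le_one (norm_nonneg _) hδ1 hk1
      _ = ‖δ‖ := pow_one _
    calc ‖δ‖ ^ k * ‖y‖ ^ (p - k) * ‖(p.choose k : K)‖
        ≤ ‖δ‖ ^ k * 1 * (p : ℝ)⁻¹ :=
          mul_le_mul (mul_le_mul_of_nonneg_left hyk (by positivity)) hC (norm_nonneg _)
            (by positivity)
    _ = ‖δ‖ ^ k * (p : ℝ)⁻¹ := by rw [mul_one]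
    _ ≤ ‖δ‖ * (p : ℝ)⁻¹ := mul_le_mul_of_nonneg_right hδk (by positivity)
    _ ≤ ‖δ‖ * max (‖δ‖ ^ (p - 1)) (p : ℝ)⁻¹ :=
          mul_le_mul_of_nonneg_left (le_max_right _ _) (norm_nonneg _)

end Pad2

section AsumFormula

lemma Asum_formula {p : ℕ} [Fact (Nat.Prime p)] {K : Type*} [NormedField K] [IsAlgClosed K]
    [CharZero K] {a b z : K} {R : ℝ} (hR : 0 < R) {c : ℕ → K} {f : K → K}
    (hf : ∀ x : K, ‖x - a‖ ≤ R →
      Summable (fun n : ℕ => c n * (x - a) ^ n) ∧ f x = ∑' n : ℕ, c n * (x - a) ^ n)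
    (hb : ‖b - a‖ = R) {t : K} (htdef : t = (z - a) / (b - a)) (N : ℕ)
    (htM : t ^ p ^ N ≠ 1) :
    Asum p K a b (fun x => f x / (x - z)) N
      = (∑' n : ℕ, c n * (b - a) ^ n * t ^ (n % p ^ N)) / (1 - t ^ p ^ N) := by
  have hp : p.Prime := Fact.out
  set u := b - a with hudef
  have hu : u ≠ 0 := by
    intro h
    rw [h, norm_zero] at hb
    exact hR.ne hb
  set M := p ^ N with hMdef
  have hM : 0 < M := pow_pos hp.pos N
  have hMK : (M : K) ≠ 0 := Nat.cast_ne_zero.mpr hM.ne'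
  have hut : u * t = z - a := by
    rw [htdef]
    field_simp
  have h1t : (1 : K) - t ^ M ≠ 0 := sub_ne_zero.mpr (Ne.symm htM)
  have hsummand : ∀ ζ ∈ Polynomial.nthRootsFinset M (1 : K),
      u * ζ * (f (a + u * ζ) / (a + u * ζ - z))
        = ∑' n : ℕ, c n * u ^ n * (ζ ^ (n + 1) / (ζ - t)) := by
    intro ζ hζ
    have hζM : ζ ^ M = 1 := (Polynomial.mem_nthRootsFinset hM _).1 hζ
    have hζn : ‖ζ‖ = 1 := norm_eq_one_of_pow_eq_one hM hζM
    have hmem : ‖a + u * ζ - a‖ ≤ R := by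
      rw [add_sub_cancel_left, norm_mul, hζn, mul_one, hb]
    have hfx := hf (a + u * ζ) hmem
    rw [add_sub_cancel_left] at hfx
    have hζt : ζ - t ≠ 0 := by
      intro h
      rw [sub_eq_zero] at h
      exact htM (h ▸ hζM)
    have hxz : a + u * ζ - z = u * (ζ - t) := by
      rw [mul_sub, hut]
      ring
    rw [hfx.2, hxz, div_eq_mul_inv, ← tsum_mul_right, ← tsum_mul_left]
    refine tsum_congr fun n => ?_
    rw [mul_pow, mul_inv]
    field_simp
    ring
  have hsummable : ∀ ζ ∈ Polynomial.nthRootsFinset M (1 : K),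
      Summable (fun n : ℕ => c n * u ^ n * (ζ ^ (n + 1) / (ζ - t))) := by
    intro ζ hζ
    have hζM : ζ ^ M = 1 := (Polynomial.mem_nthRootsFinset hM _).1 hζ
    have hζn : ‖ζ‖ = 1 := norm_eq_one_of_pow_eq_one hM hζM
    have hmem : ‖a + u * ζ - a‖ ≤ R := by
      rw [add_sub_cancel_left, norm_mul, hζn, mul_one, hb]
    have hfx := hf (a + u * ζ) hmem
    rw [add_sub_cancel_left] at hfx
    have heq : (fun n : ℕ => c n * u ^ n * (ζ ^ (n + 1) / (ζ - t)))
        = fun n : ℕ => (ζ / (ζ - t)) * (c n * (u * ζ) ^ n) := by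
      funext n
      rw [mul_pow, pow_succ]
      ring
    rw [heq]
    exact hfx.1.mul_left _
  unfold Asum
  rw [Finset.sum_congr rfl hsummand, ← Summable.tsum_finsetSum hsummable]
  have hinner : ∀ n : ℕ,
      (∑ ζ ∈ Polynomial.nthRootsFinset M (1 : K), c n * u ^ n * (ζ ^ (n + 1) / (ζ - t)))
      = (c n * u ^ n * t ^ (n % M)) * ((M : K) / (1 - t ^ M)) := by
    intro n
    rw [← Finset.mul_sum, keySum hM htM n]
    field_simp
  rw [tsum_congr hinner, tsum_mul_right]
  have hcast : ((p : K) ^ N) = (M : K) := by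
    rw [hMdef]
    push_cast
    rfl
  rw [hcast]
  field_simp

end AsumFormula

/-- The canonical path sequence `k ↦ α + lam * k`. -/
def mkSeq (α lam : ℕ) (hlam : 0 < lam) : PathSeq where
  toFun := fun k => α + lam * k
  k₀ := 1
  k₀_pos := one_pos
  pos := fun k hk => by
    have h := Nat.mul_le_mul hlam hk
    omega
  mono := fun k l _ hkl => by
    have h : lam * k < lam * l := Nat.mul_lt_mul_of_le_of_lt (le_refl lam) hkl hlam
    omega

lemma mkSeq_mem (α lam : ℕ) (hlam : 0 < lam) : mkSeq α lam hlam ∈ PhiAlpha α :=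
  ⟨lam, hlam, fun _ => rfl⟩

/-- (Cauchy's integral formula on closed discs) Let `f` be holomorphic on
`D⁺(a,R)`, `|b - a| = R`, `z ∈ D⁺(a,R) \ 𝒜(a,b)`, `α ≥ 0`. If `|a - z| < R` then
`f(z) = ∫_{𝒜(a,b),Φ_α} f(x)/(x-z) dx`; if `|a - z| = R` and `ζ` is the root of unity of
order coprime to `p` with `|(a-z)/(a-b) - ζ| < 1`, then
`f(z) = (1 - ζ^{p^α}) ∫_{𝒜(a,b),Φ_α} f(x)/(x-z) dx`. -/
theorem stmt_15 (p : ℕ) [Fact (Nat.Prime p)] (hp2 : p ≠ 2)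
    (K : Type*) [NormedField K] [CompleteSpace K] [IsAlgClosed K] [IsUltrametricDist K]
    [Algebra ℚ_[p] K] (hKext : ∀ q : ℚ_[p], ‖algebraMap ℚ_[p] K q‖ = ‖q‖)
    (a : K) (R : ℝ) (hR : 0 < R) (c : ℕ → K) (f : K → K)
    (hf : HolomorphicOn' K c a f {x : K | ‖x - a‖ ≤ R})
    (b : K) (hb : ‖b - a‖ = R) (z : K) (hz : ‖z - a‖ ≤ R) (hz' : z ∉ arc K a b)
    (α : ℕ) :
    (‖a - z‖ < R →
      HasIntegral p K a b (fun x => f x / (x - z)) (PhiAlpha α) (f z)) ∧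
    (‖a - z‖ = R → ∀ ζ : K, IsOfFinOrder ζ → (orderOf ζ).Coprime p →
      ‖(a - z) / (a - b) - ζ‖ < 1 →
      ∃ I : K, HasIntegral p K a b (fun x => f x / (x - z)) (PhiAlpha α) I ∧
        f z = (1 - ζ ^ p ^ α) * I) := by
  have hp : p.Prime := Fact.out
  haveI : CharZero K := charZero_of_ext hKext
  set u := b - a with hudef
  have hu : u ≠ 0 := by
    intro h
    rw [h, norm_zero] at hb
    exact hR.ne hb
  set t : K := (z - a) / u with htdef
  have hut : u * t = z - a := by
    rw [htdef]
    field_simp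
  have hf' : ∀ x : K, ‖x - a‖ ≤ R →
      (Summable fun n : ℕ => c n * (x - a) ^ n) ∧ f x = ∑' n : ℕ, c n * (x - a) ^ n :=
    fun x hx => hf x hx
  set g : ℕ → K := fun n => c n * u ^ n with hgdef
  have hgsum : Summable g := (hf' b (le_of_eq hb)).1
  have ht1 : ‖t‖ ≤ 1 := by
    rw [htdef, norm_div, hb]
    exact div_le_one_of_le₀ hz hR.le
  have hfz : f z = ∑' n : ℕ, g n * t ^ n := by
    rw [(hf' z hz).2]
    refine tsum_congr fun n => ?_
    rw [hgdef, ← hut, mul_pow]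
    ring
  have hfzsummable : Summable (fun n : ℕ => g n * t ^ n) := by
    refine ((hf' z hz).1).congr fun n => ?_
    rw [hgdef, ← hut, mul_pow]
    ring
  have hglim : ∀ ε : ℝ, 0 < ε → ∃ n₀ : ℕ, ∀ n, n₀ ≤ n → ‖g n‖ < ε := by
    intro ε hε
    have h1 : Filter.Tendsto g Filter.cofinite (nhds 0) := hgsum.tendsto_cofinite_zero
    rw [Nat.cofinite_eq_atTop] at h1
    have h2 : Filter.Tendsto (fun n => ‖g n‖) Filter.atTop (nhds 0) :=
      tendsto_zero_iff_norm_tendsto_zero.mp h1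
    have h3 := h2.eventually_lt_const hε
    rw [Filter.eventually_atTop] at h3
    exact h3
  have hdev : ∀ ε : ℝ, 0 < ε → ∃ n₀ : ℕ, ∀ N : ℕ, n₀ ≤ p ^ N → t ^ p ^ N ≠ 1 →
      ‖1 - t ^ p ^ N‖ = 1 →
      ‖Asum p K a b (fun x => f x / (x - z)) N - f z / (1 - t ^ p ^ N)‖ ≤ ε := by
    intro ε hε
    obtain ⟨n₀, hn₀⟩ := hglim ε hε
    refine ⟨n₀, fun N hN htM h1 => ?_⟩
    rw [Asum_formula hR hf' hb htdef N htM]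
    set M := p ^ N with hMdef
    have hs1 : Summable (fun n : ℕ => g n * t ^ (n % M)) := by
      apply NonarchimedeanAddGroup.summable_of_tendsto_cofinite_zero
      rw [Nat.cofinite_eq_atTop, tendsto_zero_iff_norm_tendsto_zero]
      have h2 : Filter.Tendsto (fun n => ‖g n‖) Filter.atTop (nhds 0) := by
        have h1' : Filter.Tendsto g Filter.cofinite (nhds 0) := hgsum.tendsto_cofinite_zero
        rw [Nat.cofinite_eq_atTop] at h1'
        exact tendsto_zero_iff_norm_tendsto_zero.mp h1'
      refine squeeze_zero (fun n => norm_nonneg _) (fun n => ?_) h2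
      rw [norm_mul]
      have h4 : ‖t ^ (n % M)‖ ≤ 1 := by
        rw [norm_pow]
        exact pow_le_one₀ (norm_nonneg t) ht1
      calc ‖g n‖ * ‖t ^ (n % M)‖ ≤ ‖g n‖ * 1 :=
            mul_le_mul_of_nonneg_left h4 (norm_nonneg _)
      _ = ‖g n‖ := mul_one _
    have heq0 : (∑' n : ℕ, c n * u ^ n * t ^ (n % M)) = ∑' n : ℕ, g n * t ^ (n % M) := rfl
    rw [heq0, ← sub_div, norm_div, h1, div_one, hfz, ← hs1.tsum_sub hfzsummable]
    refine IsUltrametricDist.norm_tsum_le_of_forall_le_of_nonneg hε.le fun n => ?_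
    by_cases hn : n < M
    · rw [Nat.mod_eq_of_lt hn]
      simp [hε.le]
    · push_neg at hn
      have hpow1 : ∀ m : ℕ, ‖t ^ m‖ ≤ 1 := fun m => by
        rw [norm_pow]; exact pow_le_one₀ (norm_nonneg t) ht1
      calc ‖g n * t ^ (n % M) - g n * t ^ n‖ = ‖g n‖ * ‖t ^ (n % M) - t ^ n‖ := by
            rw [← mul_sub, norm_mul]
      _ ≤ ‖g n‖ * 1 :=
            mul_le_mul_of_nonneg_left (norm_sub_le_one (hpow1 _) (hpow1 _)) (norm_nonneg _)
      _ = ‖g n‖ := mul_one _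
      _ ≤ ε := (hn₀ n (le_trans hN hn)).le
  constructor
  · -- Case 1 : ‖a - z‖ < R
    intro hcase
    have htlt : ‖t‖ < 1 := by
      rw [htdef, norm_div, hb, norm_sub_rev]
      exact (div_lt_one hR).mpr hcase
    have hfact : ∀ N : ℕ, t ^ p ^ N ≠ 1 ∧ ‖1 - t ^ p ^ N‖ = 1 := by
      intro N
      have hM : 0 < p ^ N := pow_pos hp.pos N
      have hnorm : ‖t ^ p ^ N‖ < 1 := by
        rw [norm_pow]
        exact pow_lt_one₀ (norm_nonneg t) htlt hM.ne'
      constructor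
      · intro h
        rw [h, norm_one] at hnorm
        exact lt_irrefl 1 hnorm
      · have h0 : ‖(-(t ^ p ^ N))‖ < ‖(1:K)‖ := by
          rw [norm_neg, norm_one]; exact hnorm
        have h2 := my_norm_add_eq_left h0
        rw [norm_one, ← sub_eq_add_neg] at h2
        exact h2
    intro ε hε
    obtain ⟨n₀, hdev₀⟩ := hdev (ε/2) (by linarith)
    have hgeo : Filter.Tendsto (fun N : ℕ => ‖f z‖ * ‖t‖ ^ N) Filter.atTop (nhds 0) := by
      have h := tendsto_pow_atTop_nhds_zero_of_lt_one (norm_nonneg t) htlt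
      simpa using h.const_mul ‖f z‖
    obtain ⟨K₁, hK₁⟩ := Filter.eventually_atTop.mp
      (hgeo.eventually_lt_const (show (0:ℝ) < ε/2 by linarith))
    refine ⟨mkSeq α 1 one_pos, mkSeq_mem α 1 one_pos, n₀ + K₁ + 1, by simp [mkSeq], ?_⟩
    intro k hk
    have hNval : (mkSeq α 1 one_pos).toFun k = α + 1 * k := rfl
    rw [hNval]
    set N := α + 1 * k with hNdef
    have hkN : k ≤ N := by omega
    have h5 : N < 2 ^ N := Nat.lt_two_pow_self
    have h6 : 2 ^ N ≤ p ^ N := Nat.pow_le_pow_left hp.two_le N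
    obtain ⟨hne, hone⟩ := hfact N
    have hA := hdev₀ N (by omega) hne hone
    have h1tN : (1:K) - t ^ p ^ N ≠ 0 := by
      intro hh
      rw [hh, norm_zero] at hone
      linarith
    have hsecond : ‖f z / (1 - t ^ p ^ N) - f z‖ < ε/2 := by
      have heqq : f z / (1 - t ^ p ^ N) - f z = f z * t ^ p ^ N / (1 - t ^ p ^ N) := by
        field_simp
        ring
      rw [heqq, norm_div, hone, div_one, norm_mul, norm_pow]
      calc ‖f z‖ * ‖t‖ ^ p ^ N ≤ ‖f z‖ * ‖t‖ ^ N := by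
            refine mul_le_mul_of_nonneg_left ?_ (norm_nonneg _)
            exact pow_le_pow_of_le_one (norm_nonneg t) htlt.le (by omega)
      _ < ε/2 := hK₁ N (by omega)
    have hsplit : Asum p K a b (fun x => f x / (x - z)) N - f z
        = (Asum p K a b (fun x => f x / (x - z)) N - f z / (1 - t ^ p ^ N))
          + (f z / (1 - t ^ p ^ N) - f z) := by ring
    rw [hsplit]
    calc ‖_ + _‖ ≤ max ‖Asum p K a b (fun x => f x / (x - z)) N - f z / (1 - t ^ p ^ N)‖
          ‖f z / (1 - t ^ p ^ N) - f z‖ := IsUltrametricDist.norm_add_le_max _ _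
    _ < ε := max_lt (lt_of_le_of_lt hA (by linarith)) (by linarith)
  · -- Case 2 : ‖a - z‖ = R
    intro hcase ζ hζfin hζcop hζclose
    have hab : a - b = -u := by rw [hudef]; ring
    have haz : a - z = -(z - a) := by ring
    have htζeq : (a - z)/(a - b) = t := by
      rw [htdef, hab, haz, neg_div_neg_eq]
    rw [htζeq] at hζclose
    set d := orderOf ζ with hddef
    have hd : 0 < d := hζfin.orderOf_pos
    have hζd : ζ ^ d = 1 := pow_orderOf_eq_one ζ
    have hζnorm : ‖ζ‖ = 1 := norm_eq_one_of_pow_eq_one hd hζd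
    have htnorm : ‖t‖ = 1 := by
      rw [htdef, norm_div, hb, norm_sub_rev, hcase, div_self hR.ne']
    have hζ1 : ζ ≠ 1 := by
      intro h1
      apply hz'
      have heq2 : t - 1 = (z - b)/u := by
        rw [htdef, hudef]
        rw [div_sub_one (show b - a ≠ 0 from hu)]
        congr 1
        ring
      rw [h1, heq2, norm_div, hb, div_lt_one hR] at hζclose
      show ‖z - b‖ < ‖a - b‖
      rw [hab, norm_neg, hb]
      exact hζclose
    have hd1 : d ≠ 1 := fun h => hζ1 (orderOf_eq_one_iff.mp h)
    have hpd : ¬ p ∣ d := by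
      intro hdvd
      have h1 : p ∣ Nat.gcd d p := Nat.dvd_gcd hdvd dvd_rfl
      rw [Nat.Coprime] at hζcop
      rw [hζcop] at h1
      exact hp.one_lt.ne' (Nat.dvd_one.mp h1)
    set r := ‖t - ζ‖ with hrdef
    have hr1 : r < 1 := hζclose
    have hr0 : 0 ≤ r := norm_nonneg _
    set q := max (r ^ (p - 1)) ((p:ℝ)⁻¹) with hqdef
    have hq0 : 0 ≤ q := le_max_of_le_right (by positivity)
    have hqq : (p:ℝ)⁻¹ < 1 := by
      rw [inv_lt_one₀ (by exact_mod_cast hp.pos)]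
      exact_mod_cast hp.one_lt
    have hq1 : q < 1 := by
      apply max_lt
      · exact pow_lt_one₀ hr0 hr1 (by have := hp.two_le; omega)
      · exact hqq
    have hiter : ∀ j : ℕ, ‖t ^ p ^ j - ζ ^ p ^ j‖ ≤ r * q ^ j := by
      intro j
      induction j with
      | zero => simp [hrdef]
      | succ j ih =>
        have hx : ‖t ^ p ^ j‖ ≤ 1 := by rw [norm_pow, htnorm, one_pow]
        have hy : ‖ζ ^ p ^ j‖ ≤ 1 := by rw [norm_pow, hζnorm, one_pow]
        have hstep := pow_p_contract hKext hx hy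
        have hpow : ∀ w : K, w ^ p ^ (j+1) = (w ^ p ^ j) ^ p := fun w => by
          rw [← pow_mul, pow_succ]
        rw [hpow t, hpow ζ]
        refine le_trans hstep ?_
        have hqj1 : q ^ j ≤ 1 := pow_le_one₀ hq0 hq1.le
        have hxyr : ‖t ^ p ^ j - ζ ^ p ^ j‖ ≤ r := le_trans ih (by nlinarith)
        have hmax : max (‖t ^ p ^ j - ζ ^ p ^ j‖ ^ (p-1)) ((p:ℝ)⁻¹) ≤ q := by
          apply max_le
          · exact le_trans (pow_le_pow_left₀ (norm_nonneg _) hxyr (p-1)) (le_max_left _ _)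
          · exact le_max_right _ _
        calc ‖t ^ p ^ j - ζ ^ p ^ j‖ * max (‖t ^ p ^ j - ζ ^ p ^ j‖ ^ (p-1)) ((p:ℝ)⁻¹)
            ≤ (r * q ^ j) * q := mul_le_mul ih hmax (by positivity) (by positivity)
        _ = r * q ^ (j+1) := by rw [pow_succ]; ring
    have hζpow_ne : ∀ m : ℕ, ζ ^ p ^ m ≠ 1 := by
      intro m h1
      have hdvd : d ∣ p ^ m := orderOf_dvd_of_pow_eq_one h1
      have hgd : Nat.gcd d (p ^ m) = d := Nat.gcd_eq_left hdvd
      have hcop2 : Nat.Coprime d (p ^ m) := Nat.Coprime.pow_right m hζcop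
      rw [Nat.Coprime] at hcop2
      rw [hcop2] at hgd
      exact hd1 hgd.symm
    have h1ζ : ∀ m : ℕ, ‖1 - ζ ^ p ^ m‖ = 1 := by
      intro m
      refine norm_one_sub_root_eq_one hKext hd hpd ?_ (hζpow_ne m)
      rw [← pow_mul, mul_comm, pow_mul, hζd, one_pow]
    have hNfacts : ∀ N : ℕ, ‖1 - t ^ p ^ N‖ = 1 ∧ t ^ p ^ N ≠ 1 := by
      intro N
      have hqN : q ^ N ≤ 1 := pow_le_one₀ hq0 hq1.le
      have h2 : ‖ζ ^ p ^ N - t ^ p ^ N‖ < 1 := by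
        rw [norm_sub_rev]
        refine lt_of_le_of_lt (hiter N) ?_
        nlinarith
      have h3 : ‖1 - t ^ p ^ N‖ = 1 := by
        have hrw : (1:K) - t ^ p ^ N = (1 - ζ ^ p ^ N) + (ζ ^ p ^ N - t ^ p ^ N) := by ring
        rw [hrw, my_norm_add_eq_left (by rw [h1ζ N]; exact h2), h1ζ N]
      refine ⟨h3, fun hh => ?_⟩
      rw [hh, sub_self, norm_zero] at h3
      linarith
    have h1ζα_ne : (1:K) - ζ ^ p ^ α ≠ 0 := sub_ne_zero.mpr (Ne.symm (hζpow_ne α))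
    refine ⟨f z / (1 - ζ ^ p ^ α), ?_, by field_simp⟩
    set lam := Nat.totient d with hlamdef
    have hlam : 0 < lam := Nat.totient_pos.mpr hd
    have hmodeq : ∀ k : ℕ, ζ ^ p ^ (α + lam * k) = ζ ^ p ^ α := by
      intro k
      have h1 : p ^ lam ≡ 1 [MOD d] := Nat.ModEq.pow_totient (Nat.Coprime.symm hζcop)
      have h2 : (p ^ lam) ^ k ≡ 1 ^ k [MOD d] := h1.pow k
      rw [one_pow] at h2
      have h3 := h2.mul_left (p ^ α)
      rw [mul_one] at h3
      have h4 : p ^ (α + lam * k) = p ^ α * (p ^ lam) ^ k := by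
        rw [pow_add, ← pow_mul]
      have hle : p ^ α ≤ p ^ α * (p ^ lam) ^ k :=
        Nat.le_mul_of_pos_right _ (pow_pos (pow_pos hp.pos lam) k)
      obtain ⟨s, hs⟩ := (Nat.modEq_iff_dvd' hle).mp h3.symm
      have h5 : p ^ α * (p ^ lam) ^ k = p ^ α + d * s := by omega
      rw [h4, h5, pow_add, pow_mul, hζd, one_pow, mul_one]
    intro ε hε
    obtain ⟨n₀, hdev₀⟩ := hdev (ε/2) (by linarith)
    have hgeo : Filter.Tendsto (fun N : ℕ => ‖f z‖ * (r * q ^ N)) Filter.atTop (nhds 0) := by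
      have h := tendsto_pow_atTop_nhds_zero_of_lt_one hq0 hq1
      have h2 := h.const_mul (‖f z‖ * r)
      rw [mul_zero] at h2
      exact h2.congr fun N => by ring
    obtain ⟨K₁, hK₁⟩ := Filter.eventually_atTop.mp
      (hgeo.eventually_lt_const (show (0:ℝ) < ε/2 by linarith))
    refine ⟨mkSeq α lam hlam, mkSeq_mem α lam hlam, n₀ + K₁ + 1, by simp [mkSeq], ?_⟩
    intro k hk
    have hNval : (mkSeq α lam hlam).toFun k = α + lam * k := rfl
    rw [hNval]
    set N := α + lam * k with hNdef
    have hkN : k ≤ N := by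
      have := Nat.le_mul_of_pos_left k hlam
      omega
    have h5 : N < 2 ^ N := Nat.lt_two_pow_self
    have h6 : 2 ^ N ≤ p ^ N := Nat.pow_le_pow_left hp.two_le N
    obtain ⟨hone, hne⟩ := hNfacts N
    have hA := hdev₀ N (by omega) hne hone
    have h1tN : (1:K) - t ^ p ^ N ≠ 0 := by
      intro hh
      rw [hh, norm_zero] at hone
      linarith
    have hsecond : ‖f z / (1 - t ^ p ^ N) - f z / (1 - ζ ^ p ^ α)‖ < ε/2 := by
      have heq2 : f z / (1 - t ^ p ^ N) - f z / (1 - ζ ^ p ^ α)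
          = f z * ((t ^ p ^ N - ζ ^ p ^ α) / ((1 - t ^ p ^ N) * (1 - ζ ^ p ^ α))) := by
        field_simp
        ring
      rw [heq2, norm_mul, norm_div, norm_mul, hone, h1ζ α, one_mul, div_one]
      have hbound : ‖t ^ p ^ N - ζ ^ p ^ α‖ ≤ r * q ^ N := by
        rw [← hmodeq k]
        exact hiter N
      calc ‖f z‖ * ‖t ^ p ^ N - ζ ^ p ^ α‖ ≤ ‖f z‖ * (r * q ^ N) :=
            mul_le_mul_of_nonneg_left hbound (norm_nonneg _)
      _ < ε/2 := hK₁ N (by omega)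
    have hsplit : Asum p K a b (fun x => f x / (x - z)) N - f z / (1 - ζ ^ p ^ α)
        = (Asum p K a b (fun x => f x / (x - z)) N - f z / (1 - t ^ p ^ N))
          + (f z / (1 - t ^ p ^ N) - f z / (1 - ζ ^ p ^ α)) := by ring
    rw [hsplit]
    calc ‖_ + _‖ ≤ max ‖Asum p K a b (fun x => f x / (x - z)) N - f z / (1 - t ^ p ^ N)‖
          ‖f z / (1 - t ^ p ^ N) - f z / (1 - ζ ^ p ^ α)‖ := IsUltrametricDist.norm_add_le_max _ _
    _ < ε := max_lt (lt_of_le_of_lt hA (by linarith)) (by linarith)
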